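/- Let I₀ = [α₀, α₀ + L₀] with α₀, L₀ > 0, let Λ : ℝ₊ × ℝ₊ → ℝ be C² with ∂_{α₁}Λ > 0 on I₀ × I₀, and set k₀ := sup_{(α₁,α₂) ∈ I₀×I₀} |∂²_{α₁}Λ(α₁,α₂)| / ∂_{α₁}Λ(α₁,α₂) (assumed finite and positive). Let z_M ∈ (0, π/2) satisfy ∫₀^{z_M} tan z dz = k₀·L₀, and define α(z) := α₀ + (1/k₀)·∫₀^z tan z' dz' for z ∈ [−z_M, z_M]. Then λ(z₁,z₂) := Λ(α(z₁), α(z₂)) satisfies: (a) ±∂_{z₁}λ(±z_M, z₂) > 0 for all z₂ ∈ [−z_M, z_M]; and (b) ∂²_{z₁}λ(z₁,z₂) ≥ (1/k₀)·inf_{I₀×I₀} ∂_{α₁}Λ > 0 for all z₁, z₂ ∈ [−z_M, z_M]. -/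

import Mathlib

open Set Real

noncomputable def D1 (Λ : ℝ → ℝ → ℝ) : ℝ × ℝ → ℝ := fun p => deriv (fun s => Λ s p.2) p.1
noncomputable def D2 (Λ : ℝ → ℝ → ℝ) : ℝ × ℝ → ℝ := fun p => deriv (fun s => D1 Λ (s, p.2)) p.1

lemma hasDerivAt_slice {g : ℝ × ℝ → ℝ} (hg : Differentiable ℝ g) (a₁ a₂ : ℝ) :
    HasDerivAt (fun s => g (s, a₂)) (fderiv ℝ g (a₁, a₂) (1, 0)) a₁ := by
  have h1 : HasDerivAt (fun s : ℝ => (s, a₂)) ((1 : ℝ), (0 : ℝ)) a₁ :=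
    (hasDerivAt_id a₁).prodMk (hasDerivAt_const a₁ a₂)
  exact ((hg (a₁, a₂)).hasFDerivAt).comp_hasDerivAt a₁ h1

lemma D1_eq (Λ : ℝ → ℝ → ℝ) (hΛ : ContDiff ℝ 2 (fun p : ℝ × ℝ => Λ p.1 p.2)) :
    D1 Λ = fun p => fderiv ℝ (fun p : ℝ × ℝ => Λ p.1 p.2) p (1, 0) := by
  funext p
  exact (hasDerivAt_slice (hΛ.differentiable (by norm_num)) p.1 p.2).deriv

lemma contDiff_D1 (Λ : ℝ → ℝ → ℝ) (hΛ : ContDiff ℝ 2 (fun p : ℝ × ℝ => Λ p.1 p.2)) :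
    ContDiff ℝ 1 (D1 Λ) := by
  rw [D1_eq Λ hΛ]
  exact (hΛ.fderiv_right (by norm_num)).clm_apply contDiff_const

lemma D2_eq (Λ : ℝ → ℝ → ℝ) (hΛ : ContDiff ℝ 2 (fun p : ℝ × ℝ => Λ p.1 p.2)) :
    D2 Λ = fun p => fderiv ℝ (D1 Λ) p (1, 0) := by
  funext p
  exact (hasDerivAt_slice ((contDiff_D1 Λ hΛ).differentiable one_ne_zero) p.1 p.2).deriv

lemma continuous_D2 (Λ : ℝ → ℝ → ℝ) (hΛ : ContDiff ℝ 2 (fun p : ℝ × ℝ => Λ p.1 p.2)) :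
    Continuous (D2 Λ) := by
  rw [D2_eq Λ hΛ]
  exact (((contDiff_D1 Λ hΛ).fderiv_right (m := 0) (by norm_num)).clm_apply contDiff_const).continuous

lemma integral_tan_eq {z : ℝ} (hz : z ∈ Ioo (-(π/2)) (π/2)) :
    (∫ t in (0:ℝ)..z, Real.tan t) = -Real.log (Real.cos z) := by
  have h0 : (0:ℝ) ∈ Ioo (-(π/2)) (π/2) := ⟨by linarith [pi_pos], by linarith [pi_pos]⟩
  have hsub : uIcc (0:ℝ) z ⊆ Ioo (-(π/2)) (π/2) := (ordConnected_Ioo).uIcc_subset h0 hz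
  have hderiv : ∀ x ∈ uIcc (0:ℝ) z,
      HasDerivAt (fun y => -Real.log (Real.cos y)) (Real.tan x) x := by
    intro x hx
    have hc : 0 < Real.cos x := Real.cos_pos_of_mem_Ioo (hsub hx)
    have h : HasDerivAt (fun y => -Real.log (Real.cos y)) _ x := ((Real.hasDerivAt_cos x).log hc.ne').neg
    simpa [Real.tan_eq_sin_div_cos, neg_div] using h
  have hi : IntervalIntegrable Real.tan MeasureTheory.volume 0 z :=
    (Real.continuousOn_tan.mono
      (fun x hx => (Real.cos_pos_of_mem_Ioo (hsub hx)).ne')).intervalIntegrable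
  have h := intervalIntegral.integral_eq_sub_of_hasDerivAt hderiv hi
  simpa using h


/-- Explicit example of Subsection 6.1: with `α(z) = α₀ + (1/k₀)∫₀^z tan`,
the Hamiltonian `λ(z₁,z₂) = Λ(α(z₁),α(z₂))` satisfies the boundary sign
conditions and uniform convexity in `z₁`. -/
theorem stmt_6 (Λ : ℝ → ℝ → ℝ) (α₀ L₀ k₀ zM : ℝ)
    (hα₀ : 0 < α₀) (hL₀ : 0 < L₀)
    (hΛ : ContDiff ℝ 2 (fun p : ℝ × ℝ => Λ p.1 p.2))
    (hΛmono : ∀ a₁ ∈ Icc α₀ (α₀ + L₀), ∀ a₂ ∈ Icc α₀ (α₀ + L₀),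
      0 < deriv (fun s => Λ s a₂) a₁)
    (hk₀pos : 0 < k₀)
    (hk₀ : k₀ = sSup {r : ℝ | ∃ a₁ ∈ Icc α₀ (α₀ + L₀), ∃ a₂ ∈ Icc α₀ (α₀ + L₀),
      r = |deriv (fun s => deriv (fun u => Λ u a₂) s) a₁| / deriv (fun s => Λ s a₂) a₁})
    (hzM : zM ∈ Ioo 0 (Real.pi / 2))
    (hzMdef : (∫ z in (0:ℝ)..zM, Real.tan z) = k₀ * L₀) :
    (∀ z₂ ∈ Icc (-zM) zM,
        0 < deriv (fun z => Λ (α₀ + (1 / k₀) * ∫ z' in (0:ℝ)..z, Real.tan z')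
              (α₀ + (1 / k₀) * ∫ z' in (0:ℝ)..z₂, Real.tan z')) zM ∧
        deriv (fun z => Λ (α₀ + (1 / k₀) * ∫ z' in (0:ℝ)..z, Real.tan z')
              (α₀ + (1 / k₀) * ∫ z' in (0:ℝ)..z₂, Real.tan z')) (-zM) < 0) ∧
    (∀ z₁ ∈ Icc (-zM) zM, ∀ z₂ ∈ Icc (-zM) zM,
        (1 / k₀) * sInf {r : ℝ | ∃ a₁ ∈ Icc α₀ (α₀ + L₀), ∃ a₂ ∈ Icc α₀ (α₀ + L₀),
            r = deriv (fun s => Λ s a₂) a₁}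
          ≤ deriv (deriv (fun z => Λ (α₀ + (1 / k₀) * ∫ z' in (0:ℝ)..z, Real.tan z')
              (α₀ + (1 / k₀) * ∫ z' in (0:ℝ)..z₂, Real.tan z'))) z₁) ∧
    0 < (1 / k₀) * sInf {r : ℝ | ∃ a₁ ∈ Icc α₀ (α₀ + L₀), ∃ a₂ ∈ Icc α₀ (α₀ + L₀),
        r = deriv (fun s => Λ s a₂) a₁} := by
  obtain ⟨hzM0, hzMπ⟩ := hzM
  have hπ := Real.pi_pos
  have hIccU : Icc (-zM) zM ⊆ Ioo (-(π/2)) (π/2) :=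
    fun x hx => ⟨by have := hx.1; linarith, by have := hx.2; linarith⟩
  set A : ℝ → ℝ := fun z => α₀ + (1/k₀) * (-Real.log (Real.cos z)) with hA
  -- derivative of A
  have hAderiv : ∀ z ∈ Ioo (-(π/2)) (π/2), HasDerivAt A ((1/k₀) * Real.tan z) z := by
    intro z hz
    have hc : 0 < Real.cos z := Real.cos_pos_of_mem_Ioo hz
    have h := ((((Real.hasDerivAt_cos z).log hc.ne').neg).const_mul (1/k₀)).const_add α₀
    rw [hA]
    simpa [Real.tan_eq_sin_div_cos, neg_div] using h
  -- range of A
  have hrange : ∀ z ∈ Icc (-zM) zM, A z ∈ Icc α₀ (α₀ + L₀) := by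
    intro z hz
    have hzU := hIccU hz
    have hc : 0 < Real.cos z := Real.cos_pos_of_mem_Ioo hzU
    have h1 : Real.log (Real.cos z) ≤ 0 := Real.log_nonpos hc.le (Real.cos_le_one z)
    have hcos : Real.cos zM ≤ Real.cos z := by
      rw [← Real.cos_abs z]
      exact Real.cos_le_cos_of_nonneg_of_le_pi (abs_nonneg z) (by linarith)
        (abs_le.mpr ⟨hz.1, hz.2⟩)
    have hcM : 0 < Real.cos zM := Real.cos_pos_of_mem_Ioo ⟨by linarith, hzMπ⟩
    have hlog : Real.log (Real.cos zM) ≤ Real.log (Real.cos z) := Real.log_le_log hcM hcos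
    have h3 : -Real.log (Real.cos zM) = k₀ * L₀ := by
      rw [← integral_tan_eq ⟨by linarith, hzMπ⟩]; exact hzMdef
    have hki : 0 < 1/k₀ := by positivity
    constructor
    · simp only [hA]; nlinarith
    · simp only [hA]
      have h4 : (1/k₀) * (-Real.log (Real.cos z)) ≤ (1/k₀) * (k₀ * L₀) := by
        apply mul_le_mul_of_nonneg_left _ hki.le; linarith
      have h5 : (1/k₀) * (k₀ * L₀) = L₀ := by field_simp
      linarith
  -- first derivative of the composite
  have hcomp : ∀ c : ℝ, ∀ z ∈ Ioo (-(π/2)) (π/2),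
      HasDerivAt (fun w => Λ (A w) c) (D1 Λ (A z, c) * ((1/k₀) * Real.tan z)) z := by
    intro c z hz
    have h1 : HasDerivAt (fun s => Λ s c) (D1 Λ (A z, c)) (A z) := by
      have h := hasDerivAt_slice (g := fun p : ℝ × ℝ => Λ p.1 p.2)
        (hΛ.differentiable (by norm_num)) (A z) c
      rwa [show fderiv ℝ (fun p : ℝ × ℝ => Λ p.1 p.2) (A z, c) (1, 0) = D1 Λ (A z, c) from
        (congrFun (D1_eq Λ hΛ) (A z, c)).symm] at h
    exact h1.comp z (hAderiv z hz)
  have hf_deriv : ∀ c : ℝ, ∀ z ∈ Ioo (-(π/2)) (π/2),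
      deriv (fun w => Λ (α₀ + (1 / k₀) * ∫ z' in (0:ℝ)..w, Real.tan z') c) z
        = D1 Λ (A z, c) * ((1/k₀) * Real.tan z) := by
    intro c z hz
    have hev : (fun w => Λ (α₀ + (1 / k₀) * ∫ z' in (0:ℝ)..w, Real.tan z') c)
        =ᶠ[nhds z] (fun w => Λ (A w) c) := by
      filter_upwards [isOpen_Ioo.mem_nhds hz] with w hw
      rw [integral_tan_eq hw]
    rw [hev.deriv_eq]
    exact (hcomp c z hz).deriv
  -- the sInf set
  set S : Set ℝ := {r : ℝ | ∃ a₁ ∈ Icc α₀ (α₀ + L₀), ∃ a₂ ∈ Icc α₀ (α₀ + L₀),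
      r = deriv (fun s => Λ s a₂) a₁} with hS
  have hSimg : S = D1 Λ '' (Icc α₀ (α₀ + L₀) ×ˢ Icc α₀ (α₀ + L₀)) := by
    ext r
    constructor
    · rintro ⟨a₁, h₁, a₂, h₂, rfl⟩
      exact ⟨(a₁, a₂), ⟨h₁, h₂⟩, rfl⟩
    · rintro ⟨⟨a₁, a₂⟩, ⟨h₁, h₂⟩, rfl⟩
      exact ⟨a₁, h₁, a₂, h₂, rfl⟩
  have hScpt : IsCompact S := by
    rw [hSimg]
    exact (isCompact_Icc.prod isCompact_Icc).image (contDiff_D1 Λ hΛ).continuous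
  have hSne : S.Nonempty := ⟨_, α₀, ⟨le_rfl, by linarith⟩, α₀, ⟨le_rfl, by linarith⟩, rfl⟩
  have hmpos : 0 < sInf S := by
    obtain ⟨a₁, h₁, a₂, h₂, he⟩ := hScpt.sInf_mem hSne
    rw [he]; exact hΛmono a₁ h₁ a₂ h₂
  have hki : 0 < 1/k₀ := by positivity
  -- the sSup set
  set T : Set ℝ := {r : ℝ | ∃ a₁ ∈ Icc α₀ (α₀ + L₀), ∃ a₂ ∈ Icc α₀ (α₀ + L₀),
      r = |deriv (fun s => deriv (fun u => Λ u a₂) s) a₁| / deriv (fun s => Λ s a₂) a₁} with hT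
  have hD1pos : ∀ p ∈ Icc α₀ (α₀ + L₀) ×ˢ Icc α₀ (α₀ + L₀), 0 < D1 Λ p :=
    fun p hp => hΛmono p.1 hp.1 p.2 hp.2
  have hTimg : T = (fun p => |D2 Λ p| / D1 Λ p) '' (Icc α₀ (α₀ + L₀) ×ˢ Icc α₀ (α₀ + L₀)) := by
    ext r
    constructor
    · rintro ⟨a₁, h₁, a₂, h₂, rfl⟩
      exact ⟨(a₁, a₂), ⟨h₁, h₂⟩, rfl⟩
    · rintro ⟨⟨a₁, a₂⟩, ⟨h₁, h₂⟩, rfl⟩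
      exact ⟨a₁, h₁, a₂, h₂, rfl⟩
  have hTcpt : IsCompact T := by
    rw [hTimg]
    exact (isCompact_Icc.prod isCompact_Icc).image_of_continuousOn
      (((continuous_D2 Λ hΛ).abs.continuousOn).div
        ((contDiff_D1 Λ hΛ).continuous.continuousOn) (fun p hp => (hD1pos p hp).ne'))
  have hratio : ∀ p ∈ Icc α₀ (α₀ + L₀) ×ˢ Icc α₀ (α₀ + L₀), |D2 Λ p| ≤ k₀ * D1 Λ p := by
    intro p hp
    have hmem : |D2 Λ p| / D1 Λ p ∈ T := by rw [hTimg]; exact ⟨p, hp, rfl⟩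
    have hle := le_csSup hTcpt.bddAbove hmem
    rw [← hk₀] at hle
    exact (div_le_iff₀ (hD1pos p hp)).mp hle
  refine ⟨?_, ?_, by positivity⟩
  · -- part (a)
    intro z₂ hz₂
    have hc2 : (α₀ + (1 / k₀) * ∫ z' in (0:ℝ)..z₂, Real.tan z') = A z₂ := by
      rw [integral_tan_eq (hIccU hz₂)]
    rw [hc2]
    have hA2 := hrange z₂ hz₂
    have ht : 0 < Real.tan zM := Real.tan_pos_of_pos_of_lt_pi_div_two hzM0 hzMπ
    constructor
    · rw [hf_deriv (A z₂) zM ⟨by linarith, hzMπ⟩]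
      have hd : 0 < D1 Λ (A zM, A z₂) := hΛmono (A zM) (hrange zM ⟨by linarith, le_rfl⟩) (A z₂) hA2
      positivity
    · rw [hf_deriv (A z₂) (-zM) ⟨by linarith, by linarith⟩]
      have hd : 0 < D1 Λ (A (-zM), A z₂) :=
        hΛmono (A (-zM)) (hrange (-zM) ⟨le_rfl, by linarith⟩) (A z₂) hA2
      rw [Real.tan_neg]
      nlinarith [mul_pos hd (mul_pos hki ht)]
  · -- part (b)
    intro z₁ hz₁ z₂ hz₂
    have hz₁U := hIccU hz₁
    have hc2 : (α₀ + (1 / k₀) * ∫ z' in (0:ℝ)..z₂, Real.tan z') = A z₂ := by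
      rw [integral_tan_eq (hIccU hz₂)]
    rw [hc2]
    have hcos : 0 < Real.cos z₁ := Real.cos_pos_of_mem_Ioo hz₁U
    have hev2 : deriv (fun w => Λ (α₀ + (1 / k₀) * ∫ z' in (0:ℝ)..w, Real.tan z') (A z₂))
        =ᶠ[nhds z₁] (fun z => D1 Λ (A z, A z₂) * ((1/k₀) * Real.tan z)) := by
      filter_upwards [isOpen_Ioo.mem_nhds hz₁U] with w hw
      exact hf_deriv (A z₂) w hw
    rw [hev2.deriv_eq]
    have h1 : HasDerivAt (fun z => D1 Λ (A z, A z₂))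
        (D2 Λ (A z₁, A z₂) * ((1/k₀) * Real.tan z₁)) z₁ := by
      have hin : HasDerivAt (fun s => D1 Λ (s, A z₂)) (D2 Λ (A z₁, A z₂)) (A z₁) := by
        have h := hasDerivAt_slice ((contDiff_D1 Λ hΛ).differentiable one_ne_zero) (A z₁) (A z₂)
        rwa [show fderiv ℝ (D1 Λ) (A z₁, A z₂) (1, 0) = D2 Λ (A z₁, A z₂) from
          (congrFun (D2_eq Λ hΛ) (A z₁, A z₂)).symm] at h
      exact hin.comp z₁ (hAderiv z₁ hz₁U)
    have h2 : HasDerivAt (fun z => (1/k₀) * Real.tan z) ((1/k₀) * (1 / Real.cos z₁ ^ 2)) z₁ :=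
      (Real.hasDerivAt_tan hcos.ne').const_mul (1/k₀)
    rw [(show HasDerivAt (fun z => D1 Λ (A z, A z₂) * ((1/k₀) * Real.tan z)) _ z₁ from h1.mul h2).deriv]
    have hd : 0 < D1 Λ (A z₁, A z₂) :=
      hΛmono (A z₁) (hrange z₁ hz₁) (A z₂) (hrange z₂ hz₂)
    have he := hratio (A z₁, A z₂) ⟨hrange z₁ hz₁, hrange z₂ hz₂⟩
    have he' : -(k₀ * D1 Λ (A z₁, A z₂)) ≤ D2 Λ (A z₁, A z₂) := neg_le_of_abs_le he
    have hm : sInf S ≤ D1 Λ (A z₁, A z₂) :=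
      csInf_le hScpt.bddBelow ⟨A z₁, hrange z₁ hz₁, A z₂, hrange z₂ hz₂, rfl⟩
    have hsec : 1 / Real.cos z₁ ^ 2 = 1 + Real.tan z₁ ^ 2 := by
      rw [← Real.inv_one_add_tan_sq hcos.ne', one_div, inv_inv]
    rw [hsec]
    have hk0 : k₀ ≠ 0 := hk₀pos.ne'
    have h7 : -(k₀ * D1 Λ (A z₁, A z₂)) * ((1/k₀) * Real.tan z₁) * ((1/k₀) * Real.tan z₁)
        ≤ D2 Λ (A z₁, A z₂) * ((1/k₀) * Real.tan z₁) * ((1/k₀) * Real.tan z₁) := by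
      nlinarith [mul_le_mul_of_nonneg_right he'
        (mul_self_nonneg ((1/k₀) * Real.tan z₁))]
    have h8 : -(k₀ * D1 Λ (A z₁, A z₂)) * ((1/k₀) * Real.tan z₁) * ((1/k₀) * Real.tan z₁)
        + D1 Λ (A z₁, A z₂) * ((1/k₀) * (1 + Real.tan z₁ ^ 2))
        = (1/k₀) * D1 Λ (A z₁, A z₂) := by
      field_simp
      ring
    have h9 : (1/k₀) * sInf S ≤ (1/k₀) * D1 Λ (A z₁, A z₂) :=
      mul_le_mul_of_nonneg_left hm hki.le
    linarith
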